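/- arXiv:1411.5235 — 7 statements merged into one kernel-verified Lean document; each statement's English description precedes it below -/
import Mathlib

section
/- Let K be symmetric positive definite, G^T injective, Q symmetric positive definite, C symmetric positive semi-definite, and η, ζ, k > 0 with S̄ = G K⁻¹ G^T. Define R = -(1/(ση)) S̄ + (1/(ση²)) S̄ ((1/η) S̄ + (1/ζ) Q)⁻¹ S̄ - (k/σ) C. If σ < 0 then R is positive definite; if 0 < σ < 1 then R is negative definite. In particular R is invertible. -/
open Matrix

lemma my_smul_posDef {m : ℕ} {A : Matrix (Fin m) (Fin m) ℝ} (hA : A.PosDef) {c : ℝ} (hc : 0 < c) :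
    (c • A).PosDef := by
  have hAt : Aᵀ = A := hA.1.eq
  refine Matrix.posDef_iff_dotProduct_mulVec.mpr ⟨by simp [Matrix.IsHermitian, hAt], fun x hx => ?_⟩
  have := hA.dotProduct_mulVec_pos hx
  simpa [Matrix.smul_mulVec, dotProduct_smul] using mul_pos hc this

lemma my_smul_posSemidef {m : ℕ} {A : Matrix (Fin m) (Fin m) ℝ} (hA : A.PosSemidef) {c : ℝ}
    (hc : 0 ≤ c) : (c • A).PosSemidef := by
  have hAt : Aᵀ = A := hA.1.eq
  refine Matrix.posSemidef_iff_dotProduct_mulVec.mpr ⟨by simp [Matrix.IsHermitian, hAt], fun x => ?_⟩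
  have := hA.dotProduct_mulVec_nonneg x
  simpa [Matrix.smul_mulVec, dotProduct_smul] using mul_nonneg hc this

lemma my_conj_posDef {n m : ℕ} {A : Matrix (Fin n) (Fin n) ℝ} (hA : A.PosDef)
    (B : Matrix (Fin m) (Fin n) ℝ) (hB : ∀ p : Fin m → ℝ, Bᵀ *ᵥ p = 0 → p = 0) :
    (B * A * Bᵀ).PosDef := by
  have hAt : Aᵀ = A := hA.1.eq
  refine Matrix.posDef_iff_dotProduct_mulVec.mpr ⟨?_, fun x hx => ?_⟩
  · have : (B * A * Bᵀ)ᵀ = B * A * Bᵀ := by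
      simp [Matrix.transpose_mul, hAt, Matrix.mul_assoc]
    simpa [Matrix.IsHermitian] using this
  · have hxB : Bᵀ *ᵥ x ≠ 0 := fun h => hx (hB x h)
    have := hA.dotProduct_mulVec_pos hxB
    simpa [Matrix.mulVec_mulVec, star, dotProduct_mulVec, Matrix.vecMul_mulVec,
      Matrix.mul_assoc] using this

lemma my_woodbury {m : ℕ} {A B : Matrix (Fin m) (Fin m) ℝ} (hA : A.PosDef) (hB : B.PosDef) :
    (A - A * (A + B)⁻¹ * A).PosDef := by
  have hM : (A + B).PosDef := hA.add hB
  have hN : (A⁻¹ + B⁻¹).PosDef := hA.inv.add hB.inv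
  have h1 : A * A⁻¹ = 1 := Matrix.mul_nonsing_inv A (isUnit_iff_ne_zero.mpr hA.det_pos.ne')
  have h2 : B * B⁻¹ = 1 := Matrix.mul_nonsing_inv B (isUnit_iff_ne_zero.mpr hB.det_pos.ne')
  have h3 : (A + B)⁻¹ * (A + B) = 1 :=
    Matrix.nonsing_inv_mul _ (isUnit_iff_ne_zero.mpr hM.det_pos.ne')
  have h4 : A * (A + B)⁻¹ * A * A⁻¹ = A * (A + B)⁻¹ := by
    rw [Matrix.mul_assoc (A * (A + B)⁻¹), h1, Matrix.mul_one]
  have h5 : A * (A + B)⁻¹ * A * B⁻¹ = A * B⁻¹ - A * (A + B)⁻¹ := by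
    have e1 : A * (A + B)⁻¹ * A * B⁻¹ + A * (A + B)⁻¹ = A * (A + B)⁻¹ * (A + B) * B⁻¹ := by
      rw [Matrix.mul_add (A * (A + B)⁻¹), Matrix.add_mul,
        Matrix.mul_assoc (A * (A + B)⁻¹) B B⁻¹, h2, Matrix.mul_one]
    have e2 : A * (A + B)⁻¹ * (A + B) * B⁻¹ = A * B⁻¹ := by
      rw [Matrix.mul_assoc A (A + B)⁻¹ (A + B), h3, Matrix.mul_one]
    have := e1.trans e2
    linear_combination (norm := abel) this
  have key : (A - A * (A + B)⁻¹ * A) * (A⁻¹ + B⁻¹) = 1 := by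
    rw [Matrix.sub_mul, Matrix.mul_add, Matrix.mul_add, h1, h4, h5]
    abel
  have := Matrix.inv_eq_left_inv key
  exact this ▸ hN.inv

theorem stmt3 {n m : ℕ} (K : Matrix (Fin n) (Fin n) ℝ) (G : Matrix (Fin m) (Fin n) ℝ)
    (Q C : Matrix (Fin m) (Fin m) ℝ) (η ζ k σ : ℝ)
    (hK : K.PosDef) (hG : ∀ p : Fin m → ℝ, Gᵀ *ᵥ p = 0 → p = 0)
    (hQ : Q.PosDef) (hC : C.PosSemidef)
    (hη : 0 < η) (hζ : 0 < ζ) (hk : 0 < k)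
    (hσ : σ < 0 ∨ (0 < σ ∧ σ < 1))
    (S R : Matrix (Fin m) (Fin m) ℝ)
    (hS : S = G * K⁻¹ * Gᵀ)
    (hR : R = -(1 / (σ * η)) • S
        + (1 / (σ * η ^ 2)) • (S * ((1 / η) • S + (1 / ζ) • Q)⁻¹ * S)
        - (k / σ) • C) :
    (σ < 0 → R.PosDef) ∧ ((0 < σ ∧ σ < 1) → (-R).PosDef) ∧ IsUnit R.det := by
  have hσne : σ ≠ 0 := by rcases hσ with h | ⟨h, _⟩ <;> [exact h.ne; exact h.ne']
  have hSpd : S.PosDef := hS ▸ my_conj_posDef hK.inv G hG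
  have hA : ((1 / η) • S).PosDef := my_smul_posDef hSpd (by positivity)
  have hB : ((1 / ζ) • Q).PosDef := my_smul_posDef hQ (by positivity)
  have hP : ((1 / η) • S - (1 / η) • S * ((1 / η) • S + (1 / ζ) • Q)⁻¹ * ((1 / η) • S)).PosDef :=
    my_woodbury hA hB
  have hPC : ((1 / η) • S - (1 / η) • S * ((1 / η) • S + (1 / ζ) • Q)⁻¹ * ((1 / η) • S)
      + k • C).PosDef := hP.add_posSemidef (my_smul_posSemidef hC hk.le)
  have hRform : R = (-(1 / σ)) •
      ((1 / η) • S - (1 / η) • S * ((1 / η) • S + (1 / ζ) • Q)⁻¹ * ((1 / η) • S) + k • C) := by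
    rw [hR]
    simp only [Matrix.smul_mul, Matrix.mul_smul, smul_smul, smul_sub, smul_add]
    match_scalars
    all_goals field_simp
    all_goals try ring
    all_goals tauto
  have case1 : σ < 0 → R.PosDef := fun h => by
    rw [hRform]
    have : (0:ℝ) < -(1 / σ) := by
      have := one_div_neg.mpr h; linarith
    exact my_smul_posDef hPC this
  have case2 : (0 < σ ∧ σ < 1) → (-R).PosDef := fun ⟨h, _⟩ => by
    rw [hRform, ← neg_smul]
    simp only [neg_neg]
    exact my_smul_posDef hPC (by positivity)
  refine ⟨case1, case2, ?_⟩
  rw [isUnit_iff_ne_zero]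
  rcases hσ with h | h
  · exact (case1 h).det_pos.ne'
  · have := (case2 h).det_pos
    rw [Matrix.det_neg] at this
    intro h0
    rw [h0, mul_zero] at this
    exact lt_irrefl 0 this
end

section
/- Consider the 3×3 block matrix 𝒜 = [[ηK, G^T, G^T],[G, -kC, 0],[G, 0, -ζ⁻¹Q]] and the lower block triangular preconditioner 𝒫 = [[ηK, 0, 0],[G, ℛ, 0],[G, 𝒯, 𝒮]] with ℛ = -(1/(ση)) S̄ + (1/(ση²)) S̄ ((1/η)S̄ + (1/ζ)Q)⁻¹ S̄ - (k/σ)C, 𝒮 = -((1/η) S̄ + ζ⁻¹ Q), 𝒯 = -(1/η) S̄, where S̄ = G K⁻¹ G^T. Then the generalized eigenvalue problem 𝒜 x = Φ 𝒫 x has only two distinct eigenvalues, Φ = 1 and Φ = σ, and eigenvectors for Φ = 1 have the form (u, 0, 0). -/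
open Matrix

section Aux

variable {m n : ℕ}

lemma aux_smul_posDef {c : ℝ} {A : Matrix (Fin m) (Fin m) ℝ} (hc : 0 < c) (hA : A.PosDef) :
    (c • A).PosDef := by
  refine posDef_iff_dotProduct_mulVec.mpr ⟨?_, fun x hx => ?_⟩
  · unfold Matrix.IsHermitian
    rw [conjTranspose_smul, hA.1.eq]
    simp
  · rw [smul_mulVec, dotProduct_smul, smul_eq_mul]
    exact mul_pos hc ((posDef_iff_dotProduct_mulVec.mp hA).2 hx)

lemma aux_smul_posSemidef {c : ℝ} {A : Matrix (Fin m) (Fin m) ℝ} (hc : 0 ≤ c)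
    (hA : A.PosSemidef) : (c • A).PosSemidef := by
  refine posSemidef_iff_dotProduct_mulVec.mpr ⟨?_, fun x => ?_⟩
  · unfold Matrix.IsHermitian
    rw [conjTranspose_smul, hA.1.eq]
    simp
  · rw [smul_mulVec, dotProduct_smul, smul_eq_mul]
    exact mul_nonneg hc ((posSemidef_iff_dotProduct_mulVec.mp hA).2 x)

lemma aux_conj_posDef {A : Matrix (Fin n) (Fin n) ℝ} {G : Matrix (Fin m) (Fin n) ℝ}
    (hA : A.PosDef) (hG : ∀ p : Fin m → ℝ, Gᵀ *ᵥ p = 0 → p = 0) :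
    (G * A * Gᵀ).PosDef := by
  refine posDef_iff_dotProduct_mulVec.mpr ⟨?_, fun x hx => ?_⟩
  · have hAt : Aᵀ = A := by
      rw [← conjTranspose_eq_transpose_of_trivial, hA.1.eq]
    unfold Matrix.IsHermitian
    rw [conjTranspose_eq_transpose_of_trivial, transpose_mul, transpose_mul,
      transpose_transpose, hAt, Matrix.mul_assoc]
  · have key : star x ⬝ᵥ (G * A * Gᵀ) *ᵥ x = star (Gᵀ *ᵥ x) ⬝ᵥ A *ᵥ (Gᵀ *ᵥ x) := by
      rw [← mulVec_mulVec, ← mulVec_mulVec, star_trivial, star_trivial,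
        dotProduct_mulVec x, ← mulVec_transpose]
    rw [key]
    exact (posDef_iff_dotProduct_mulVec.mp hA).2 (fun h => hx (hG x h))

lemma aux_pd_mulVec_eq_zero {N : Matrix (Fin m) (Fin m) ℝ} (hN : N.PosDef) {p : Fin m → ℝ}
    (h : N *ᵥ p = 0) : p = 0 := by
  have hdet : IsUnit N.det := hN.det_pos.ne'.isUnit
  calc p = (N⁻¹ * N) *ᵥ p := by rw [Matrix.nonsing_inv_mul N hdet, one_mulVec]
  _ = N⁻¹ *ᵥ (N *ᵥ p) := by rw [mulVec_mulVec]
  _ = 0 := by rw [h, mulVec_zero]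

/-- For positive definite `A, B`, `A - A (A+B)⁻¹ A = (A⁻¹ + B⁻¹)⁻¹`, hence positive definite. -/
lemma aux_schur_posDef {A B : Matrix (Fin m) (Fin m) ℝ} (hA : A.PosDef) (hB : B.PosDef) :
    (A - A * (A + B)⁻¹ * A).PosDef := by
  have hM : (A + B).PosDef := hA.add hB
  have hAd : IsUnit A.det := hA.det_pos.ne'.isUnit
  have hBd : IsUnit B.det := hB.det_pos.ne'.isUnit
  have hMd : IsUnit (A + B).det := hM.det_pos.ne'.isUnit
  have hsum : (A⁻¹ + B⁻¹).PosDef := hA.inv.add hB.inv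
  have key : (A - A * (A + B)⁻¹ * A) * (A⁻¹ + B⁻¹) = 1 := by
    have e1 : A * (A + B)⁻¹ * A * A⁻¹ = A * (A + B)⁻¹ := by
      rw [Matrix.mul_assoc (A * (A + B)⁻¹), Matrix.mul_nonsing_inv A hAd, Matrix.mul_one]
    have e2 : A * (A + B)⁻¹ + A * (A + B)⁻¹ * A * B⁻¹ = A * B⁻¹ := by
      have : A * (A + B)⁻¹ + A * (A + B)⁻¹ * A * B⁻¹
          = A * (A + B)⁻¹ * (B + A) * B⁻¹ := by
        rw [Matrix.mul_add, Matrix.add_mul, Matrix.mul_assoc (A * (A + B)⁻¹) B B⁻¹,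
          Matrix.mul_nonsing_inv B hBd, Matrix.mul_one]
      rw [this, add_comm B A, Matrix.mul_assoc A, Matrix.nonsing_inv_mul (A + B) hMd,
        Matrix.mul_one]
    calc (A - A * (A + B)⁻¹ * A) * (A⁻¹ + B⁻¹)
        = A * A⁻¹ + A * B⁻¹ - (A * (A + B)⁻¹ * A * A⁻¹ + A * (A + B)⁻¹ * A * B⁻¹) := by
          rw [Matrix.sub_mul, Matrix.mul_add, Matrix.mul_add]
    _ = 1 + A * B⁻¹ - (A * (A + B)⁻¹ + A * (A + B)⁻¹ * A * B⁻¹) := by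
          rw [Matrix.mul_nonsing_inv A hAd, e1]
    _ = 1 + A * B⁻¹ - A * B⁻¹ := by rw [e2]
    _ = 1 := add_sub_cancel_right 1 (A * B⁻¹)
  have : (A⁻¹ + B⁻¹)⁻¹ = A - A * (A + B)⁻¹ * A := Matrix.inv_eq_left_inv key
  rw [← this]
  exact hsum.inv

end Aux

/-- The generalized eigenvalue problem 𝒜 x = Φ 𝒫 x, written blockwise for
x = (u, p, p_c), for the exact lower block-triangular preconditioner. -/
theorem stmt5 {n m : ℕ} (K : Matrix (Fin n) (Fin n) ℝ) (G : Matrix (Fin m) (Fin n) ℝ)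
    (Q C : Matrix (Fin m) (Fin m) ℝ) (η ζ k σ : ℝ)
    (hK : K.PosDef) (hG : ∀ p : Fin m → ℝ, Gᵀ *ᵥ p = 0 → p = 0)
    (hQ : Q.PosDef) (hC : C.PosSemidef)
    (hη : 0 < η) (hζ : 0 < ζ) (hk : 0 < k)
    (hσ : σ < 0 ∨ (0 < σ ∧ σ < 1))
    (S R 𝒮 𝒯 : Matrix (Fin m) (Fin m) ℝ)
    (hS : S = G * K⁻¹ * Gᵀ)
    (hR : R = -(1 / (σ * η)) • S
        + (1 / (σ * η ^ 2)) • (S * ((1 / η) • S + (1 / ζ) • Q)⁻¹ * S)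
        - (k / σ) • C)
    (h𝒮 : 𝒮 = -((1 / η) • S + ζ⁻¹ • Q))
    (h𝒯 : 𝒯 = -(1 / η) • S)
    (Φ : ℝ) (u : Fin n → ℝ) (p pc : Fin m → ℝ)
    (hx : ¬(u = 0 ∧ p = 0 ∧ pc = 0))
    (h1 : η • (K *ᵥ u) + Gᵀ *ᵥ p + Gᵀ *ᵥ pc = Φ • (η • (K *ᵥ u)))
    (h2 : G *ᵥ u - k • (C *ᵥ p) = Φ • (G *ᵥ u + R *ᵥ p))
    (h3 : G *ᵥ u - ζ⁻¹ • (Q *ᵥ pc) = Φ • (G *ᵥ u + 𝒯 *ᵥ p + 𝒮 *ᵥ pc)) :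
    (Φ = 1 ∨ Φ = σ) ∧ (Φ = 1 → p = 0 ∧ pc = 0) := by
  have hσ0 : σ ≠ 0 := by rcases hσ with h | ⟨h, _⟩ <;> [exact h.ne; exact h.ne']
  have hσ1 : 1 - σ > 0 := by rcases hσ with h | ⟨_, h⟩ <;> linarith
  have hη0 : η ≠ 0 := hη.ne'
  have hζ0 : ζ ≠ 0 := hζ.ne'
  -- positive definiteness of the basic blocks
  have hKi : (K⁻¹).PosDef := hK.inv
  have hSpd : S.PosDef := hS ▸ aux_conj_posDef hKi hG
  have hApd : ((1 / η) • S).PosDef := aux_smul_posDef (by positivity) hSpd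
  have hBpd : ((1 / ζ) • Q).PosDef := aux_smul_posDef (by positivity) hQ
  set A : Matrix (Fin m) (Fin m) ℝ := (1 / η) • S with hA
  set B : Matrix (Fin m) (Fin m) ℝ := (1 / ζ) • Q with hB
  set M : Matrix (Fin m) (Fin m) ℝ := A + B with hM
  have hMpd : M.PosDef := hApd.add hBpd
  have hMdet : IsUnit M.det := hMpd.det_pos.ne'.isUnit
  set D : Matrix (Fin m) (Fin m) ℝ := A - A * M⁻¹ * A with hD
  have hDpd : D.PosDef := aux_schur_posDef hApd hBpd
  -- rewrite D in terms of S
  have hAMA : A * M⁻¹ * A = (1 / η ^ 2) • (S * M⁻¹ * S) := by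
    rw [hA, Matrix.smul_mul, Matrix.smul_mul, Matrix.mul_smul, smul_smul]
    ring_nf
  have hDS : D = (1 / η) • S - (1 / η ^ 2) • (S * M⁻¹ * S) := by
    rw [hD, hAMA]
  -- key matrix identity : (-σ) • R = D + k • C
  have hsR' : (-σ) • R = D + k • C := by
    rw [hR, hDS]
    match_scalars <;> field_simp <;> ring
  have hDCpd : (D + k • C).PosDef :=
    hDpd.add_posSemidef (aux_smul_posSemidef hk.le hC)
  -- Part 2 : Φ = 1 → p = 0 ∧ pc = 0
  have part2 : Φ = 1 → p = 0 ∧ pc = 0 := by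
    intro hΦ
    subst hΦ
    rw [one_smul] at h1 h2 h3
    -- p + pc = 0
    have hw : p + pc = 0 := by
      apply hG
      rw [mulVec_add]
      funext i
      have hi := congrFun h1 i
      simp only [Pi.add_apply, Pi.smul_apply, smul_eq_mul, Pi.zero_apply] at hi ⊢
      linarith
    -- R p + k C p = 0
    have hRp : R *ᵥ p + k • (C *ᵥ p) = 0 := by
      funext i
      have hi := congrFun h2 i
      simp only [Pi.add_apply, Pi.sub_apply, Pi.smul_apply, smul_eq_mul, Pi.zero_apply] at hi ⊢
      linarith
    -- N := D + (k*(1-σ)) • C is PD and kills p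
    have hNpd : (D + (k * (1 - σ)) • C).PosDef :=
      hDpd.add_posSemidef (aux_smul_posSemidef (by positivity) hC)
    have hNp : (D + (k * (1 - σ)) • C) *ᵥ p = 0 := by
      have hNe : D + (k * (1 - σ)) • C = (-σ) • R + (-σ * k) • C := by
        rw [hsR']
        match_scalars <;> ring
      rw [hNe, Matrix.add_mulVec, smul_mulVec, smul_mulVec]
      funext i
      have hi := congrFun hRp i
      simp only [Pi.add_apply, Pi.smul_apply, smul_eq_mul, Pi.zero_apply] at hi ⊢
      linear_combination (-σ) * hi
    have hp : p = 0 := aux_pd_mulVec_eq_zero hNpd hNp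
    refine ⟨hp, ?_⟩
    have := hw
    rw [hp, zero_add] at this
    exact this
  refine ⟨?_, part2⟩
  by_cases hΦ1 : Φ = 1
  · exact Or.inl hΦ1
  · right
    by_contra hΦσ
    have hd0 : Φ - 1 ≠ 0 := sub_ne_zero.mpr hΦ1
    have hc0 : (Φ - 1) * η ≠ 0 := mul_ne_zero hd0 hη0
    -- from h1 : ((Φ-1)*η) • (K *ᵥ u) = Gᵀ *ᵥ p + Gᵀ *ᵥ pc
    have hKu : ((Φ - 1) * η) • (K *ᵥ u) = Gᵀ *ᵥ p + Gᵀ *ᵥ pc := by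
      funext i
      have hi := congrFun h1 i
      simp only [Pi.add_apply, Pi.smul_apply, smul_eq_mul] at hi ⊢
      linarith
    have hKdet : IsUnit K.det := hK.det_pos.ne'.isUnit
    have huid : u = K⁻¹ *ᵥ (K *ᵥ u) := by
      rw [mulVec_mulVec, Matrix.nonsing_inv_mul K hKdet, one_mulVec]
    -- clean form of G u
    have hGu2 : ((Φ - 1) * η) • (G *ᵥ u) = S *ᵥ p + S *ᵥ pc := by
      have step : ((Φ - 1) * η) • u = K⁻¹ *ᵥ (Gᵀ *ᵥ p + Gᵀ *ᵥ pc) := by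
        rw [← hKu, mulVec_smul, ← huid]
      calc ((Φ - 1) * η) • (G *ᵥ u) = G *ᵥ (((Φ - 1) * η) • u) := by rw [mulVec_smul]
      _ = G *ᵥ (K⁻¹ *ᵥ (Gᵀ *ᵥ p + Gᵀ *ᵥ pc)) := by rw [step]
      _ = S *ᵥ p + S *ᵥ pc := by
          simp only [hS, mulVec_add, mulVec_mulVec, Matrix.mul_assoc]
    -- clean (scaled) form of h3
    have hT2v : 𝒯 *ᵥ p = (-(1 / η)) • (S *ᵥ p) := by
      rw [h𝒯]
      rw [neg_smul, Matrix.neg_mulVec, smul_mulVec, neg_smul]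
    have hS2v : 𝒮 *ᵥ pc = (-(1 / η)) • (S *ᵥ pc) + (-ζ⁻¹) • (Q *ᵥ pc) := by
      rw [h𝒮, hA, Matrix.neg_mulVec, Matrix.add_mulVec, smul_mulVec, smul_mulVec]
      match_scalars <;> ring
    rw [hT2v, hS2v] at h3
    have h3v : (η * ζ) • (G *ᵥ u) - η • (Q *ᵥ pc)
        = Φ • ((η * ζ) • (G *ᵥ u) - ζ • (S *ᵥ p) - ζ • (S *ᵥ pc) - η • (Q *ᵥ pc)) := by
      calc (η * ζ) • (G *ᵥ u) - η • (Q *ᵥ pc)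
          = (η * ζ) • (G *ᵥ u - ζ⁻¹ • (Q *ᵥ pc)) := by
            match_scalars <;> field_simp
      _ = (η * ζ) • (Φ • (G *ᵥ u + (-(1 / η)) • (S *ᵥ p)
            + ((-(1 / η)) • (S *ᵥ pc) + (-ζ⁻¹) • (Q *ᵥ pc)))) := by rw [h3]
      _ = Φ • ((η * ζ) • (G *ᵥ u) - ζ • (S *ᵥ p) - ζ • (S *ᵥ pc) - η • (Q *ᵥ pc)) := by
            match_scalars <;> field_simp <;> ring
    -- eliminate G u between h3v and hGu2 :
    have hMw' : ((Φ - 1) * ζ) • (S *ᵥ p) + ((Φ - 1) * ζ) • (S *ᵥ pc)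
        + ((Φ - 1) * η) • (Q *ᵥ pc) = 0 := by
      funext i
      have hi := congrFun h3v i
      have hgi := congrFun hGu2 i
      simp only [Pi.add_apply, Pi.sub_apply, Pi.smul_apply, smul_eq_mul, Pi.zero_apply]
        at hi hgi ⊢
      linear_combination hi + ζ * hgi
    have hMw : ζ • (S *ᵥ p) + ζ • (S *ᵥ pc) + η • (Q *ᵥ pc) = 0 := by
      have hMw2 : (Φ - 1) • (ζ • (S *ᵥ p) + ζ • (S *ᵥ pc) + η • (Q *ᵥ pc)) = (0 : Fin m → ℝ) := by
        rw [← hMw']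
        match_scalars <;> ring
      rcases smul_eq_zero.mp hMw2 with h | h
      · exact absurd h hd0
      · exact h
    -- recover pc
    have hMv2 : (η * ζ) • (M *ᵥ pc) = (-ζ) • (S *ᵥ p) := by
      have hMv : (η * ζ) • (M *ᵥ pc) = ζ • (S *ᵥ pc) + η • (Q *ᵥ pc) := by
        rw [hM, Matrix.add_mulVec, hA, hB, smul_mulVec, smul_mulVec]
        match_scalars <;> field_simp <;> ring
      rw [hMv]
      funext i
      have hi := congrFun hMw i
      simp only [Pi.add_apply, Pi.smul_apply, Pi.neg_apply, smul_eq_mul, Pi.zero_apply,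
        neg_mul] at hi ⊢
      linarith
    have hηζ0 : η * ζ ≠ 0 := mul_ne_zero hη0 hζ0
    have hMpc : M *ᵥ pc = ((η * ζ)⁻¹ * (-ζ)) • (S *ᵥ p) := by
      have h := congrArg (fun v => ((η * ζ)⁻¹ : ℝ) • v) hMv2
      simp only [smul_smul] at h
      rw [inv_mul_cancel₀ hηζ0, one_smul] at h
      exact h
    have hpc : pc = ((η * ζ)⁻¹ * (-ζ)) • (M⁻¹ *ᵥ (S *ᵥ p)) := by
      calc pc = (M⁻¹ * M) *ᵥ pc := by rw [Matrix.nonsing_inv_mul M hMdet, one_mulVec]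
      _ = M⁻¹ *ᵥ (M *ᵥ pc) := by rw [mulVec_mulVec]
      _ = ((η * ζ)⁻¹ * (-ζ)) • (M⁻¹ *ᵥ (S *ᵥ p)) := by rw [hMpc, mulVec_smul]
    have hyv : η • (S *ᵥ pc) = -((S * M⁻¹ * S) *ᵥ p) := by
      rw [hpc, mulVec_smul, mulVec_mulVec, mulVec_mulVec, smul_smul]
      have : η * ((η * ζ)⁻¹ * (-ζ)) = -1 := by field_simp
      rw [this, neg_one_smul]
    -- clean form of R
    have hRv : (σ * η ^ 2) • (R *ᵥ p) = (-η) • (S *ᵥ p) + (S * M⁻¹ * S) *ᵥ p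
        - (k * η ^ 2) • (C *ᵥ p) := by
      have hRclean : (σ * η ^ 2) • R = (-η) • S + (S * M⁻¹ * S) - (k * η ^ 2) • C := by
        rw [hR]
        match_scalars <;> field_simp <;> ring
      rw [← smul_mulVec, hRclean, Matrix.sub_mulVec, Matrix.add_mulVec,
        smul_mulVec, smul_mulVec]
    -- derive (σ - Φ) η² • (R p) = 0
    have key : ((σ - Φ) * η ^ 2) • (R *ᵥ p) = 0 := by
      funext i
      have hri := congrFun hRv i
      have hgi := congrFun hGu2 i
      have hyi := congrFun hyv i
      have h2i := congrFun h2 i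
      simp only [Pi.add_apply, Pi.sub_apply, Pi.smul_apply, Pi.neg_apply, smul_eq_mul,
        Pi.zero_apply] at hri hgi hyi h2i ⊢
      linear_combination hri + η * hgi + hyi + η ^ 2 * h2i
    have hσΦ : (σ - Φ) * η ^ 2 ≠ 0 :=
      mul_ne_zero (sub_ne_zero.mpr (fun h => hΦσ h.symm)) (pow_ne_zero 2 hη0)
    have hRp0 : R *ᵥ p = 0 := by
      rcases smul_eq_zero.mp key with h | h
      · exact absurd h hσΦ
      · exact h
    -- conclude p = 0, pc = 0, u = 0 : contradiction
    have hp : p = 0 := by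
      apply aux_pd_mulVec_eq_zero hDCpd
      rw [← hsR', smul_mulVec, hRp0, smul_zero]
    have hpc0 : pc = 0 := by
      rw [hpc, hp]
      simp
    have hu0 : u = 0 := by
      have hKu0 : ((Φ - 1) * η) • (K *ᵥ u) = 0 := by
        rw [hKu, hp, hpc0]
        simp
      have : K *ᵥ u = 0 := by
        rcases smul_eq_zero.mp hKu0 with h | h
        · exact absurd h hc0
        · exact h
      calc u = K⁻¹ *ᵥ (K *ᵥ u) := huid
      _ = 0 := by rw [this, mulVec_zero]
    exact hx ⟨hu0, hp, hpc0⟩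
end

section
/- With the preconditioner 𝒫 of Theorem (exact lower triangular preconditioner), if 𝒜 x = 1·𝒫 x for x = (u, p, p_c), then p = -p_c, (ℛ + kC) p = 0, and since ℛ + kC is invertible one has p = p_c = 0. -/
open Matrix

private lemma posdef_smul {m : ℕ} {M : Matrix (Fin m) (Fin m) ℝ} (hM : M.PosDef)
    {c : ℝ} (hc : 0 < c) : (c • M).PosDef := by
  refine Matrix.PosDef.of_dotProduct_mulVec_pos ?_ (fun x hx => ?_)
  · unfold Matrix.IsHermitian
    rw [conjTranspose_smul, hM.isHermitian]
    simp
  · rw [smul_mulVec, dotProduct_smul, smul_eq_mul]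
    exact mul_pos hc (hM.dotProduct_mulVec_pos hx)

theorem stmt6 {n m : ℕ} (K : Matrix (Fin n) (Fin n) ℝ) (G : Matrix (Fin m) (Fin n) ℝ)
    (Q C : Matrix (Fin m) (Fin m) ℝ) (η ζ k σ : ℝ)
    (hK : K.PosDef) (hG : ∀ p : Fin m → ℝ, Gᵀ *ᵥ p = 0 → p = 0)
    (hQ : Q.PosDef) (hC : C.PosSemidef)
    (hη : 0 < η) (hζ : 0 < ζ) (hk : 0 < k)
    (hσ : σ < 0 ∨ (0 < σ ∧ σ < 1))
    (S R 𝒮 𝒯 : Matrix (Fin m) (Fin m) ℝ)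
    (hS : S = G * K⁻¹ * Gᵀ)
    (hR : R = -(1 / (σ * η)) • S
        + (1 / (σ * η ^ 2)) • (S * ((1 / η) • S + (1 / ζ) • Q)⁻¹ * S)
        - (k / σ) • C)
    (h𝒮 : 𝒮 = -((1 / η) • S + ζ⁻¹ • Q))
    (h𝒯 : 𝒯 = -(1 / η) • S)
    (u : Fin n → ℝ) (p pc : Fin m → ℝ)
    (h1 : η • (K *ᵥ u) + Gᵀ *ᵥ p + Gᵀ *ᵥ pc = (1 : ℝ) • (η • (K *ᵥ u)))
    (h2 : G *ᵥ u - k • (C *ᵥ p) = (1 : ℝ) • (G *ᵥ u + R *ᵥ p))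
    (h3 : G *ᵥ u - ζ⁻¹ • (Q *ᵥ pc) = (1 : ℝ) • (G *ᵥ u + 𝒯 *ᵥ p + 𝒮 *ᵥ pc)) :
    p = -pc ∧ (R + k • C) *ᵥ p = 0 ∧ p = 0 ∧ pc = 0 := by
  have hσ1 : σ < 1 := by
    rcases hσ with h | ⟨_, h⟩
    · linarith
    · exact h
  have hσ0 : σ ≠ 0 := by
    rcases hσ with h | ⟨h, _⟩
    · exact ne_of_lt h
    · exact ne_of_gt h
  -- Step 1 : p = -pc
  have h1' : Gᵀ *ᵥ (p + pc) = 0 := by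
    rw [one_smul] at h1
    rw [mulVec_add]
    have h := congrArg (fun z => z - η • (K *ᵥ u)) h1
    simp only [sub_self] at h
    calc Gᵀ *ᵥ p + Gᵀ *ᵥ pc
        = η • (K *ᵥ u) + Gᵀ *ᵥ p + Gᵀ *ᵥ pc - η • (K *ᵥ u) := by abel
      _ = 0 := h
  have hppc : p = -pc := by
    have h0 : p + pc = 0 := hG _ h1'
    exact eq_neg_of_add_eq_zero_left h0
  -- Step 2 : (R + k•C) p = 0
  have hRp : (R + k • C) *ᵥ p = 0 := by
    rw [one_smul] at h2
    have h : R *ᵥ p = - (k • (C *ᵥ p)) := by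
      calc R *ᵥ p = (G *ᵥ u + R *ᵥ p) - G *ᵥ u := by abel
        _ = (G *ᵥ u - k • (C *ᵥ p)) - G *ᵥ u := by rw [h2]
        _ = - (k • (C *ᵥ p)) := by abel
    rw [add_mulVec, smul_mulVec, h]
    exact neg_add_cancel _
  -- Step 3 : p = 0
  have hKinv : (K⁻¹).PosDef := hK.inv
  have hSsym : Sᵀ = S := by
    have hk' : (K⁻¹)ᵀ = K⁻¹ := by
      have := hKinv.isHermitian
      rw [← conjTranspose_eq_transpose_of_trivial]; exact this
    rw [hS, transpose_mul, transpose_mul, transpose_transpose, hk', Matrix.mul_assoc]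
  have hSpd : S.PosDef := by
    refine Matrix.PosDef.of_dotProduct_mulVec_pos (by rw [IsHermitian, conjTranspose_eq_transpose_of_trivial]; exact hSsym) fun x hx => ?_
    have hGx : Gᵀ *ᵥ x ≠ 0 := fun h => hx (hG x h)
    have key : x ⬝ᵥ (S *ᵥ x) = (Gᵀ *ᵥ x) ⬝ᵥ (K⁻¹ *ᵥ (Gᵀ *ᵥ x)) := by
      rw [hS, ← mulVec_mulVec, ← mulVec_mulVec, dotProduct_mulVec, ← mulVec_transpose]
    have := hKinv.dotProduct_mulVec_pos hGx
    simp only [star_trivial] at this ⊢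
    rw [key]; exact this
  set T : Matrix (Fin m) (Fin m) ℝ := (1 / η) • S + (1 / ζ) • Q with hT
  have hA : ((1/η) • S).PosDef := posdef_smul hSpd (by positivity)
  have hB : ((1/ζ) • Q).PosDef := posdef_smul hQ (by positivity)
  have hTpd : T.PosDef := hA.add hB
  have hTinvpd : (T⁻¹).PosDef := hTpd.inv
  have hTunit : IsUnit T.det := isUnit_iff_isUnit_det T |>.mp hTpd.isUnit
  by_cases hp : p = 0
  · refine ⟨hppc, hRp, hp, ?_⟩
    have : pc = -p := by rw [hppc]; simp
    rw [this, hp]; simp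
  · exfalso
    have hapos : 0 < p ⬝ᵥ (S *ᵥ p) := by
      have := hSpd.dotProduct_mulVec_pos hp
      simpa [star_trivial] using this
    have hcnn : 0 ≤ p ⬝ᵥ (C *ᵥ p) := by
      have := hC.dotProduct_mulVec_nonneg p
      simpa [star_trivial] using this
    have hvne : S *ᵥ p ≠ 0 := by
      intro h
      rw [h, dotProduct_zero] at hapos
      exact lt_irrefl 0 hapos
    have hTy : T *ᵥ (T⁻¹ *ᵥ (S *ᵥ p)) = S *ᵥ p := by
      rw [mulVec_mulVec, Matrix.mul_nonsing_inv T hTunit, one_mulVec]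
    have hyne : T⁻¹ *ᵥ (S *ᵥ p) ≠ 0 := by
      intro h
      apply hvne
      rw [← hTy, h, mulVec_zero]
    -- key strict inequality
    have hkey : (S *ᵥ p) ⬝ᵥ (T⁻¹ *ᵥ (S *ᵥ p)) < η * (p ⬝ᵥ (S *ᵥ p)) := by
      set y : Fin m → ℝ := T⁻¹ *ᵥ (S *ᵥ p) with hy
      set w : Fin m → ℝ := η • p - y with hw
      have hAz : ((1/η) • S) *ᵥ (η • p) = S *ᵥ p := by
        rw [smul_mulVec, mulVec_smul, smul_smul]
        rw [one_div, inv_mul_cancel₀ (ne_of_gt hη), one_smul]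
      have hvsplit : ((1/η) • S) *ᵥ y + ((1/ζ) • Q) *ᵥ y = S *ᵥ p := by
        rw [← add_mulVec, ← hT, hTy]
      have hAw : ((1/η) • S) *ᵥ w = ((1/ζ) • Q) *ᵥ y := by
        rw [hw, mulVec_sub, hAz, ← hvsplit]; abel
      have hsym : ∀ x z : Fin m → ℝ,
          x ⬝ᵥ (((1/η) • S) *ᵥ z) = (((1/η) • S) *ᵥ x) ⬝ᵥ z := by
        intro x z
        rw [dotProduct_mulVec, ← mulVec_transpose, transpose_smul, hSsym]
      have hdecomp : (S *ᵥ p) ⬝ᵥ w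
          = w ⬝ᵥ (((1/η) • S) *ᵥ w) + y ⬝ᵥ (((1/ζ) • Q) *ᵥ y) := by
        have e1 : (S *ᵥ p) ⬝ᵥ w = (η • p) ⬝ᵥ (((1/η) • S) *ᵥ w) := by
          rw [← hAz, hsym]
        have e2 : (η • p) ⬝ᵥ (((1/η) • S) *ᵥ w) = (w + y) ⬝ᵥ (((1/η) • S) *ᵥ w) := by
          congr 1
          rw [hw]; abel
        rw [e1, e2, add_dotProduct, hAw]
      have hterm1 : 0 ≤ w ⬝ᵥ (((1/η) • S) *ᵥ w) := by
        have := hA.posSemidef.dotProduct_mulVec_nonneg w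
        simpa [star_trivial] using this
      have hterm2 : 0 < y ⬝ᵥ (((1/ζ) • Q) *ᵥ y) := by
        have := hB.dotProduct_mulVec_pos hyne
        simpa [star_trivial] using this
      have hvw : 0 < (S *ᵥ p) ⬝ᵥ w := by rw [hdecomp]; linarith
      have hvz : (S *ᵥ p) ⬝ᵥ (η • p) = η * (p ⬝ᵥ (S *ᵥ p)) := by
        rw [dotProduct_smul, smul_eq_mul, dotProduct_comm]
      have hfin : (S *ᵥ p) ⬝ᵥ w
          = η * (p ⬝ᵥ (S *ᵥ p)) - (S *ᵥ p) ⬝ᵥ y := by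
        rw [hw, dotProduct_sub, hvz]
      rw [hfin] at hvw
      linarith
    -- scalar equation from hRp
    have hb' : p ⬝ᵥ ((S * T⁻¹ * S) *ᵥ p) = (S *ᵥ p) ⬝ᵥ (T⁻¹ *ᵥ (S *ᵥ p)) := by
      rw [← mulVec_mulVec, ← mulVec_mulVec, dotProduct_mulVec, ← mulVec_transpose, hSsym]
    have hE : -(1 / (σ * η)) * (p ⬝ᵥ (S *ᵥ p))
        + (1 / (σ * η ^ 2)) * ((S *ᵥ p) ⬝ᵥ (T⁻¹ *ᵥ (S *ᵥ p)))
        - (k / σ) * (p ⬝ᵥ (C *ᵥ p)) + k * (p ⬝ᵥ (C *ᵥ p)) = 0 := by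
      have h0 : p ⬝ᵥ ((R + k • C) *ᵥ p) = 0 := by rw [hRp, dotProduct_zero]
      rw [hR] at h0
      simp only [add_mulVec, sub_mulVec, smul_mulVec, dotProduct_add, dotProduct_sub,
        dotProduct_smul, smul_eq_mul] at h0
      rw [hb'] at h0
      linarith
    -- derive the contradiction
    have hη0 : η ≠ 0 := ne_of_gt hη
    obtain ⟨a, ha⟩ : ∃ x, p ⬝ᵥ (S *ᵥ p) = x := ⟨_, rfl⟩
    obtain ⟨b, hbb⟩ : ∃ x, (S *ᵥ p) ⬝ᵥ (T⁻¹ *ᵥ (S *ᵥ p)) = x := ⟨_, rfl⟩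
    obtain ⟨c, hcc⟩ : ∃ x, p ⬝ᵥ (C *ᵥ p) = x := ⟨_, rfl⟩
    rw [ha] at hapos
    rw [hcc] at hcnn
    rw [ha, hbb] at hkey
    rw [ha, hbb, hcc] at hE
    have hE2 : b - η * a + k * η^2 * (σ - 1) * c = 0 := by
      field_simp at hE
      have hmul : σ^2 * η * (b - η * a + k * η^2 * (σ - 1) * c) = 0 := by
        linear_combination σ^2 * η * hE
      have hσ2η : (0:ℝ) < σ^2 * η := by positivity
      exact (mul_eq_zero.mp hmul).resolve_left (ne_of_gt hσ2η)
    nlinarith [mul_nonneg (mul_nonneg (mul_nonneg hk.le (sq_nonneg η))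
      (by linarith : (0:ℝ) ≤ 1 - σ)) hcnn]
end

section
/- Suppose 𝒜 x = Φ 𝒫 x with Φ ≠ 1 and x = (u, p, p_c). Then G u = (1/(η(Φ-1))) S̄ (p + p_c) and p_c = -(1/η) ((1/η) S̄ + ζ⁻¹ Q)⁻¹ S̄ p, and substituting yields ℛ p = (1/Φ)(-(1/η) S̄ + (1/η²) S̄ ((1/η)S̄ + (1/ζ)Q)⁻¹ S̄ - kC) p, hence Φ = σ whenever p ≠ 0. -/
open Matrix

private lemma posDef_add_posSemidef {m : ℕ} {A B : Matrix (Fin m) (Fin m) ℝ}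
    (hA : A.PosDef) (hB : B.PosSemidef) : (A + B).PosDef := by
  refine posDef_iff_dotProduct_mulVec.2 ⟨hA.1.add hB.1, fun x hx => ?_⟩
  have h1 := hA.dotProduct_mulVec_pos hx
  have h2 := hB.dotProduct_mulVec_nonneg x
  simp only [add_mulVec, dotProduct_add, star_trivial] at *
  linarith

private lemma posDef_smul' {m : ℕ} {A : Matrix (Fin m) (Fin m) ℝ} {c : ℝ}
    (hA : A.PosDef) (hc : 0 < c) : (c • A).PosDef := by
  have ht : Aᵀ = A := by simpa using hA.1.eq
  refine posDef_iff_dotProduct_mulVec.2 ⟨?_, fun x hx => ?_⟩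
  · simp [Matrix.IsHermitian, conjTranspose_smul, ht]
  · have := hA.dotProduct_mulVec_pos hx
    simp only [smul_mulVec, dotProduct_smul, star_trivial, smul_eq_mul] at *
    positivity

private lemma posSemidef_smul' {m : ℕ} {A : Matrix (Fin m) (Fin m) ℝ} {c : ℝ}
    (hA : A.PosSemidef) (hc : 0 ≤ c) : (c • A).PosSemidef := by
  have ht : Aᵀ = A := by simpa using hA.1.eq
  refine posSemidef_iff_dotProduct_mulVec.2 ⟨?_, fun x => ?_⟩
  · simp [Matrix.IsHermitian, conjTranspose_smul, ht]
  · have := hA.dotProduct_mulVec_nonneg x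
    simp only [smul_mulVec, dotProduct_smul, star_trivial, smul_eq_mul] at *
    positivity

private lemma posDef_conj {n m : ℕ} (K : Matrix (Fin n) (Fin n) ℝ) (G : Matrix (Fin m) (Fin n) ℝ)
    (hK : K.PosDef) (hG : ∀ p : Fin m → ℝ, Gᵀ *ᵥ p = 0 → p = 0) :
    (G * K⁻¹ * Gᵀ).PosDef := by
  have hKi := hK.inv
  refine posDef_iff_dotProduct_mulVec.2 ⟨?_, fun x hx => ?_⟩
  · have := isHermitian_mul_mul_conjTranspose G hKi.1
    simpa using this
  · have hx' : Gᵀ *ᵥ x ≠ 0 := fun h => hx (hG x h)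
    have h := hKi.dotProduct_mulVec_pos hx'
    rw [star_trivial] at h ⊢
    rw [← mulVec_mulVec, ← mulVec_mulVec, dotProduct_mulVec, ← mulVec_transpose]
    exact h

theorem stmt7 {n m : ℕ} (K : Matrix (Fin n) (Fin n) ℝ) (G : Matrix (Fin m) (Fin n) ℝ)
    (Q C : Matrix (Fin m) (Fin m) ℝ) (η ζ k σ : ℝ)
    (hK : K.PosDef) (hG : ∀ p : Fin m → ℝ, Gᵀ *ᵥ p = 0 → p = 0)
    (hQ : Q.PosDef) (hC : C.PosSemidef)
    (hη : 0 < η) (hζ : 0 < ζ) (hk : 0 < k)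
    (hσ : σ < 0 ∨ (0 < σ ∧ σ < 1))
    (S R 𝒮 𝒯 : Matrix (Fin m) (Fin m) ℝ)
    (hS : S = G * K⁻¹ * Gᵀ)
    (hR : R = -(1 / (σ * η)) • S
        + (1 / (σ * η ^ 2)) • (S * ((1 / η) • S + (1 / ζ) • Q)⁻¹ * S)
        - (k / σ) • C)
    (h𝒮 : 𝒮 = -((1 / η) • S + ζ⁻¹ • Q))
    (h𝒯 : 𝒯 = -(1 / η) • S)
    (Φ : ℝ) (hΦ : Φ ≠ 1) (u : Fin n → ℝ) (p pc : Fin m → ℝ)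
    (h1 : η • (K *ᵥ u) + Gᵀ *ᵥ p + Gᵀ *ᵥ pc = Φ • (η • (K *ᵥ u)))
    (h2 : G *ᵥ u - k • (C *ᵥ p) = Φ • (G *ᵥ u + R *ᵥ p))
    (h3 : G *ᵥ u - ζ⁻¹ • (Q *ᵥ pc) = Φ • (G *ᵥ u + 𝒯 *ᵥ p + 𝒮 *ᵥ pc)) :
    G *ᵥ u = (1 / (η * (Φ - 1))) • (S *ᵥ (p + pc)) ∧
    pc = -(1 / η) • (((1 / η) • S + ζ⁻¹ • Q)⁻¹ *ᵥ (S *ᵥ p)) ∧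
    R *ᵥ p = Φ⁻¹ • ((-(1 / η) • S
        + (1 / η ^ 2) • (S * ((1 / η) • S + (1 / ζ) • Q)⁻¹ * S)
        - k • C) *ᵥ p) ∧
    (p ≠ 0 → Φ = σ) := by
  have hΦ1 : Φ - 1 ≠ 0 := sub_ne_zero.2 hΦ
  have hη0 : η ≠ 0 := hη.ne'
  have hζ0 : ζ ≠ 0 := hζ.ne'
  have hσ0 : σ ≠ 0 := by
    rcases hσ with h | ⟨h, _⟩
    exacts [h.ne, h.ne']
  have hζeq : (1 / ζ : ℝ) = ζ⁻¹ := one_div ζ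
  set M : Matrix (Fin m) (Fin m) ℝ := (1 / η) • S + ζ⁻¹ • Q with hM
  have hSpd : S.PosDef := hS ▸ posDef_conj K G hK hG
  have hApd : ((1 / η) • S).PosDef := posDef_smul' hSpd (by positivity)
  have hBpd : ((ζ⁻¹ : ℝ) • Q).PosDef := posDef_smul' hQ (by positivity)
  have hMpd : M.PosDef := posDef_add_posSemidef hApd hBpd.posSemidef
  have hKd : IsUnit K.det := isUnit_iff_ne_zero.2 hK.det_pos.ne'
  have hMd : IsUnit M.det := isUnit_iff_ne_zero.2 hMpd.det_pos.ne'
  -- Goal 1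
  have step1 : Gᵀ *ᵥ (p + pc) = ((Φ - 1) * η) • (K *ᵥ u) := by
    rw [mulVec_add]
    linear_combination (norm := module) h1
  have step2 : K *ᵥ u = (1 / ((Φ - 1) * η)) • (Gᵀ *ᵥ (p + pc)) := by
    rw [step1, smul_smul, one_div, inv_mul_cancel₀ (mul_ne_zero hΦ1 hη0), one_smul]
  have step3 : u = K⁻¹ *ᵥ (K *ᵥ u) := by
    rw [mulVec_mulVec, nonsing_inv_mul K hKd, one_mulVec]
  have goal1 : G *ᵥ u = (1 / (η * (Φ - 1))) • (S *ᵥ (p + pc)) := by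
    conv_lhs => rw [step3, step2]
    rw [mulVec_smul, mulVec_smul, mulVec_mulVec, mulVec_mulVec, ← hS]
    rw [mul_comm (Φ - 1) η]
  -- Goal 2
  have hsc : (1 - Φ) * (1 / (η * (Φ - 1))) = -(1 / η) := by field_simp; ring
  have hg : (1 - Φ) • (G *ᵥ u) = (-(1 / η)) • (S *ᵥ p + S *ᵥ pc) := by
    rw [goal1, smul_smul, hsc, mulVec_add]
  have h3' : G *ᵥ u - ζ⁻¹ • (Q *ᵥ pc) =
      Φ • (G *ᵥ u + (-(1 / η)) • (S *ᵥ p) +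
        ((-(1 / η)) • (S *ᵥ pc) + (-(ζ⁻¹ : ℝ)) • (Q *ᵥ pc))) := by
    rw [h3, h𝒯, h𝒮]
    congr 2
    · rw [neg_smul, neg_mulVec, smul_mulVec, neg_smul]
    · rw [neg_mulVec, add_mulVec, smul_mulVec, smul_mulVec]
      module
  have stepE0 : (Φ - 1) • ((1 / η) • (S *ᵥ pc) + ζ⁻¹ • (Q *ᵥ pc) + (1 / η) • (S *ᵥ p))
      = (0 : Fin m → ℝ) := by
    linear_combination (norm := module) h3' - hg
  have stepE1 : (1 / η) • (S *ᵥ pc) + ζ⁻¹ • (Q *ᵥ pc) + (1 / η) • (S *ᵥ p) = 0 := by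
    rcases smul_eq_zero.1 stepE0 with h | h
    · exact absurd h hΦ1
    · exact h
  have stepE : M *ᵥ pc = (-(1 / η)) • (S *ᵥ p) := by
    rw [hM, add_mulVec, smul_mulVec, smul_mulVec]
    linear_combination (norm := module) stepE1
  have goal2 : pc = -(1 / η) • (M⁻¹ *ᵥ (S *ᵥ p)) := by
    have h : pc = M⁻¹ *ᵥ (M *ᵥ pc) := by
      rw [mulVec_mulVec, nonsing_inv_mul M hMd, one_mulVec]
    rw [h, stepE, mulVec_smul]
  -- N and its relation to R
  set N : Matrix (Fin m) (Fin m) ℝ :=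
    -(1 / η) • S + (1 / η ^ 2) • (S * M⁻¹ * S) - k • C with hN
  have hRN : R = σ⁻¹ • N := by
    rw [hR, hN, hζeq, ← hM]
    module
  have hb : S *ᵥ pc = (-(1 / η)) • ((S * M⁻¹ * S) *ᵥ p) := by
    rw [goal2, mulVec_smul, mulVec_mulVec, mulVec_mulVec]
  have hNexp : N *ᵥ p = (-(1 / η)) • (S *ᵥ p) + (1 / η ^ 2) • ((S * M⁻¹ * S) *ᵥ p)
      - k • (C *ᵥ p) := by
    rw [hN, sub_mulVec, add_mulVec, smul_mulVec, smul_mulVec, smul_mulVec]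
  have hΦN : Φ • (R *ᵥ p) = N *ᵥ p := by
    rw [hNexp]
    linear_combination (norm := module) hg - h2 - (1 / η : ℝ) • hb
  -- Negative definiteness of N
  have hAd : IsUnit ((1 / η) • S).det := isUnit_iff_ne_zero.2 hApd.det_pos.ne'
  have hBd : IsUnit ((ζ⁻¹ : ℝ) • Q).det := isUnit_iff_ne_zero.2 hBpd.det_pos.ne'
  set A : Matrix (Fin m) (Fin m) ℝ := (1 / η) • S with hA
  set B : Matrix (Fin m) (Fin m) ℝ := (ζ⁻¹ : ℝ) • Q with hB
  have hAi : A⁻¹ * A = 1 := nonsing_inv_mul A hAd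
  have hBi : B⁻¹ * B = 1 := nonsing_inv_mul B hBd
  have hMi : M * M⁻¹ = 1 := mul_nonsing_inv M hMd
  have hMAB : M = A + B := rfl
  have key : (A⁻¹ + B⁻¹) * (A - A * M⁻¹ * A) = 1 := by
    calc (A⁻¹ + B⁻¹) * (A - A * M⁻¹ * A)
        = (A⁻¹ * A + B⁻¹ * A) * (1 - M⁻¹ * A) := by noncomm_ring
      _ = (B⁻¹ * B + B⁻¹ * A) * (1 - M⁻¹ * A) := by rw [hAi, hBi]
      _ = B⁻¹ * ((A + B) * (1 - M⁻¹ * A)) := by noncomm_ring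
      _ = B⁻¹ * (M - (M * M⁻¹) * A) := by rw [hMAB]; noncomm_ring
      _ = B⁻¹ * (M - A) := by rw [hMi, Matrix.one_mul]
      _ = B⁻¹ * B := by rw [hMAB]; noncomm_ring
      _ = 1 := hBi
  have hWpd : (A⁻¹ + B⁻¹).PosDef := posDef_add_posSemidef hApd.inv hBpd.inv.posSemidef
  have hsubpd : (A - A * M⁻¹ * A).PosDef := by
    have := (inv_eq_right_inv key).symm ▸ hWpd.inv
    exact this
  have hnegN : -N = (A - A * M⁻¹ * A) + k • C := by
    have hAMA : A * M⁻¹ * A = (1 / η ^ 2) • (S * M⁻¹ * S) := by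
      rw [hA, Matrix.smul_mul, Matrix.smul_mul, Matrix.mul_smul, smul_smul]
      congr 1
      ring
    rw [hN, hAMA, hA]
    module
  have hnegNpd : (-N).PosDef := by
    rw [hnegN]
    exact posDef_add_posSemidef hsubpd (posSemidef_smul' hC hk.le)
  have goal4 : p ≠ 0 → Φ = σ := by
    intro hp
    have hNp0 : N *ᵥ p ≠ 0 := by
      intro h
      have := hnegNpd.dotProduct_mulVec_pos hp
      rw [star_trivial, neg_mulVec, h] at this
      simp at this
    have : (Φ * σ⁻¹ - 1) • (N *ᵥ p) = 0 := by
      have := hΦN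
      rw [hRN, smul_mulVec, smul_smul] at this
      rw [sub_smul, this, one_smul, sub_self]
    rcases smul_eq_zero.1 this with h | h
    · have : Φ * σ⁻¹ = 1 := by linarith [sub_eq_zero.1 h]
      field_simp at this
      exact this
    · exact absurd h hNp0
  refine ⟨goal1, goal2, ?_, goal4⟩
  rw [hζeq, ← hM, ← hN]
  by_cases hp : p = 0
  · subst hp
    simp [mulVec_zero]
  · have hΦσ := goal4 hp
    have hΦ0 : Φ ≠ 0 := hΦσ ▸ hσ0
    rw [hRN, smul_mulVec, hΦσ]
end

section
/- Let 𝒫_t = [[η𝒦, 0, 0],[G, ℛ, 0],[G, 0, 𝒮]] be a block lower triangular matrix with 𝒦, -ℛ, -𝒮 symmetric positive definite. Then 𝒫_t⁻¹ 𝒜, for 𝒜 = [[ηK, G^T, G^T],[G, -kC, 0],[G, 0, -ζ⁻¹Q]], satisfies ℋ 𝒫_t⁻¹ 𝒜 = (𝒫_t⁻¹ 𝒜)^T ℋ where ℋ = diag(η(K - 𝒦), -ℛ, -𝒮); i.e., ℋ 𝒫_t⁻¹ 𝒜 is symmetric. -/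
open Matrix


lemma aux_block {N M : Type*} [Fintype N] [Fintype M] [DecidableEq N] [DecidableEq M]
    (A K' : Matrix N N ℝ) (B : Matrix M N ℝ) (D E : Matrix M M ℝ)
    (hA : IsUnit A.det) (hD : IsUnit D.det)
    (hAs : Aᵀ = A) (hKs : K'ᵀ = K') (hDs : Dᵀ = D) (hEs : Eᵀ = E) :
    (fromBlocks (K' - A) 0 0 (-D)) * ((fromBlocks A 0 B D)⁻¹ * fromBlocks K' Bᵀ B E)
      = ((fromBlocks A 0 B D)⁻¹ * fromBlocks K' Bᵀ B E)ᵀ * (fromBlocks (K' - A) 0 0 (-D)) := by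
  have hPinv : (fromBlocks A 0 B D)⁻¹
      = fromBlocks A⁻¹ 0 (-(D⁻¹ * B * A⁻¹)) D⁻¹ := by
    apply inv_eq_right_inv
    rw [fromBlocks_multiply]
    simp only [Matrix.mul_nonsing_inv _ hA, Matrix.mul_nonsing_inv _ hD,
      Matrix.mul_zero, Matrix.zero_mul, add_zero, zero_add, Matrix.mul_neg]
    rw [← Matrix.mul_assoc, Matrix.mul_nonsing_inv_cancel_left _ _ hD]
    simp [← fromBlocks_one]
  rw [hPinv]
  have hAi : A⁻¹ᵀ = A⁻¹ := by rw [transpose_nonsing_inv, hAs]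
  have hDi : D⁻¹ᵀ = D⁻¹ := by rw [transpose_nonsing_inv, hDs]
  have ha1 : ∀ X : Matrix N N ℝ, A * (A⁻¹ * X) = X :=
    fun X => Matrix.mul_nonsing_inv_cancel_left _ _ hA
  have ha2 : ∀ X : Matrix N M ℝ, A * (A⁻¹ * X) = X :=
    fun X => Matrix.mul_nonsing_inv_cancel_left _ _ hA
  have hc1 : ∀ X : Matrix M N ℝ, D * (D⁻¹ * X) = X :=
    fun X => Matrix.mul_nonsing_inv_cancel_left _ _ hD
  have hc2 : ∀ X : Matrix M M ℝ, D * (D⁻¹ * X) = X :=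
    fun X => Matrix.mul_nonsing_inv_cancel_left _ _ hD
  rw [fromBlocks_multiply, fromBlocks_multiply, fromBlocks_transpose, fromBlocks_multiply]
  simp only [Matrix.zero_mul, Matrix.mul_zero, add_zero, zero_add, transpose_add,
    transpose_neg, transpose_mul, transpose_transpose, hAi, hDi, hAs, hKs, hDs, hEs,
    Matrix.mul_add, Matrix.add_mul, Matrix.mul_neg, Matrix.neg_mul, Matrix.mul_assoc,
    Matrix.nonsing_inv_mul _ hA, Matrix.nonsing_inv_mul _ hD, Matrix.mul_one,
    hc1, hc2, ha1, ha2, neg_zero, neg_add, Matrix.sub_mul, Matrix.mul_sub, neg_neg,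
    sub_eq_add_neg]

lemma symm_of_posSemidef {p : ℕ} {X : Matrix (Fin p) (Fin p) ℝ} (h : X.PosSemidef) :
    Xᵀ = X := by
  simpa [conjTranspose_eq_transpose_of_trivial] using h.1.eq

theorem stmt8 {n m : ℕ} (K 𝒦 : Matrix (Fin n) (Fin n) ℝ) (G : Matrix (Fin m) (Fin n) ℝ)
    (Q C R S : Matrix (Fin m) (Fin m) ℝ) (η ζ k : ℝ)
    (hK : K.PosDef) (h𝒦 : 𝒦.PosDef) (hQ : Q.PosDef) (hC : C.PosSemidef)
    (hR : (-R).PosDef) (hS : (-S).PosDef)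
    (hη : 0 < η) (hζ : 0 < ζ) (hk : 0 < k)
    (𝒜 𝒫t ℋ : Matrix (Fin n ⊕ (Fin m ⊕ Fin m)) (Fin n ⊕ (Fin m ⊕ Fin m)) ℝ)
    (h𝒜 : 𝒜 = fromBlocks (η • K) (fromCols Gᵀ Gᵀ) (fromRows G G)
        (fromBlocks (-(k • C)) 0 0 (-(ζ⁻¹ • Q))))
    (h𝒫t : 𝒫t = fromBlocks (η • 𝒦) 0 (fromRows G G) (fromBlocks R 0 0 S))
    (hℋ : ℋ = fromBlocks (η • (K - 𝒦)) 0 0 (fromBlocks (-R) 0 0 (-S))) :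
    ℋ * (𝒫t⁻¹ * 𝒜) = (𝒫t⁻¹ * 𝒜)ᵀ * ℋ := by
  have hKs : Kᵀ = K := symm_of_posSemidef hK.posSemidef
  have h𝒦s : 𝒦ᵀ = 𝒦 := symm_of_posSemidef h𝒦.posSemidef
  have hQs : Qᵀ = Q := symm_of_posSemidef hQ.posSemidef
  have hCs : Cᵀ = C := symm_of_posSemidef hC
  have hRs : Rᵀ = R := by
    have := symm_of_posSemidef hR.posSemidef
    simpa [transpose_neg, neg_inj] using this
  have hSs : Sᵀ = S := by
    have := symm_of_posSemidef hS.posSemidef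
    simpa [transpose_neg, neg_inj] using this
  have hRu : IsUnit R.det := by
    have h := isUnit_iff_ne_zero.2 hR.det_pos.ne'
    rw [Matrix.det_neg] at h
    exact (IsUnit.mul_iff.1 h).2
  have hSu : IsUnit S.det := by
    have h := isUnit_iff_ne_zero.2 hS.det_pos.ne'
    rw [Matrix.det_neg] at h
    exact (IsUnit.mul_iff.1 h).2
  have hA : IsUnit (η • 𝒦).det := by
    rw [Matrix.det_smul]
    exact isUnit_iff_ne_zero.2 (mul_ne_zero (pow_ne_zero _ hη.ne') h𝒦.det_pos.ne')
  have hD : IsUnit (fromBlocks R (0 : Matrix (Fin m) (Fin m) ℝ) 0 S).det := by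
    rw [Matrix.det_fromBlocks_zero₂₁]
    exact hRu.mul hSu
  have key := aux_block (η • 𝒦) (η • K) (fromRows G G)
    (fromBlocks R 0 0 S) (fromBlocks (-(k • C)) 0 0 (-(ζ⁻¹ • Q)))
    hA hD
    (by rw [transpose_smul, h𝒦s])
    (by rw [transpose_smul, hKs])
    (by simp [fromBlocks_transpose, hRs, hSs])
    (by simp [fromBlocks_transpose, transpose_smul, hCs, hQs])
  rw [h𝒜, h𝒫t, hℋ]
  have e1 : η • (K - 𝒦) = η • K - η • 𝒦 := smul_sub _ _ _
  have e2 : fromCols Gᵀ Gᵀ = (fromRows G G)ᵀ := (transpose_fromRows _ _).symm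
  have e3 : fromBlocks (-R) (0 : Matrix (Fin m) (Fin m) ℝ) 0 (-S)
      = -(fromBlocks R 0 0 S) := by simp [fromBlocks_neg]
  rw [e1, e2, e3]
  exact key
end

section
/- Let A, P, H be square matrices with P and H invertible. If there exist positive constants C₀, C₁ such that C₀ H ≤ H P⁻¹ A ≤ C₁ H in the sense of symmetric positive semi-definiteness (all three differences being symmetric), then the spectrum of P⁻¹A is real and contained in [C₀, C₁]. -/
open Matrix
open scoped ComplexOrder

private lemma psd_map_aux {N : ℕ} {S : Matrix (Fin N) (Fin N) ℝ} (h : S.PosSemidef) :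
    (S.map (algebraMap ℝ ℂ)).PosSemidef := by
  obtain ⟨B, rfl⟩ : ∃ B : Matrix (Fin N) (Fin N) ℝ, S = Bᴴ * B := by
    open scoped MatrixOrder in
    obtain ⟨B, rfl⟩ := CStarAlgebra.nonneg_iff_eq_star_mul_self.mp h.nonneg
    exact ⟨B, rfl⟩
  have : (Bᴴ * B).map (algebraMap ℝ ℂ) = (B.map (algebraMap ℝ ℂ))ᴴ * (B.map (algebraMap ℝ ℂ)) := by
    rw [Matrix.map_mul]
    congr 1
    ext i j
    simp [conjTranspose_apply, Matrix.map_apply]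
  rw [this]
  exact posSemidef_conjTranspose_mul_self _

theorem stmt10 {N : ℕ} (A P H : Matrix (Fin N) (Fin N) ℝ)
    (hP : IsUnit P.det) (hHdef : H.PosDef)
    (hsym : (H * (P⁻¹ * A)).IsSymm)
    (C₀ C₁ : ℝ) (hC₀ : 0 < C₀) (hC₁ : 0 < C₁)
    (hlow : (H * (P⁻¹ * A) - C₀ • H).PosSemidef)
    (hup : (C₁ • H - H * (P⁻¹ * A)).PosSemidef) :
    ∀ μ : ℂ, μ ∈ spectrum ℂ ((P⁻¹ * A).map (algebraMap ℝ ℂ)) →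
      μ.im = 0 ∧ C₀ ≤ μ.re ∧ μ.re ≤ C₁ := by
  intro μ hμ
  set M : Matrix (Fin N) (Fin N) ℝ := P⁻¹ * A with hM
  set Mc := M.map (algebraMap ℝ ℂ) with hMc
  set Hc := H.map (algebraMap ℝ ℂ) with hHc
  -- eigenvector
  rw [spectrum.mem_iff] at hμ
  rw [Matrix.isUnit_iff_isUnit_det, isUnit_iff_ne_zero, not_not] at hμ
  obtain ⟨v, hv0, hv⟩ := (Matrix.exists_mulVec_eq_zero_iff).mpr hμ
  have heig : Mc *ᵥ v = μ • v := by
    have : (algebraMap ℂ (Matrix (Fin N) (Fin N) ℂ)) μ - Mc = μ • 1 - Mc := by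
      simp [Algebra.algebraMap_eq_smul_one]
    rw [this, sub_mulVec, smul_mulVec, one_mulVec, sub_eq_zero] at hv
    exact hv.symm
  -- quadratic forms
  set t : ℂ := star v ⬝ᵥ Hc *ᵥ v with ht
  set s : ℂ := star v ⬝ᵥ (Hc * Mc) *ᵥ v with hs
  have hHcpsd : Hc.PosSemidef := psd_map_aux hHdef.posSemidef
  have ht0 : 0 ≤ t := hHcpsd.dotProduct_mulVec_nonneg v
  have htne : t ≠ 0 := by
    intro h
    rw [ht, hHcpsd.dotProduct_mulVec_zero_iff] at h
    have hdet : Hc.det ≠ 0 := by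
      have hd : Hc.det = (algebraMap ℝ ℂ) H.det := by
        rw [hHc]
        rw [(RingHom.map_det (algebraMap ℝ ℂ) H), RingHom.mapMatrix_apply]
      rw [hd]
      simp only [ne_eq, map_eq_zero]
      exact hHdef.det_pos.ne'
    have := Matrix.eq_zero_of_mulVec_eq_zero hdet h
    exact hv0 this
  have hst : s = μ * t := by
    rw [hs, ht, ← mulVec_mulVec, heig, mulVec_smul, dotProduct_smul, smul_eq_mul]
  -- lower bound
  have hmapHM : (H * M).map (algebraMap ℝ ℂ) = Hc * Mc := Matrix.map_mul
  have hl : 0 ≤ s - (C₀ : ℂ) * t := by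
    have := (psd_map_aux hlow).dotProduct_mulVec_nonneg v
    have hmap : (H * M - C₀ • H).map (algebraMap ℝ ℂ) = Hc * Mc - (C₀ : ℂ) • Hc := by
      rw [Matrix.map_sub _ (by simp), hmapHM]
      congr 1
      ext i j
      simp [Matrix.map_apply, hHc]
    rw [hmap, sub_mulVec, dotProduct_sub, smul_mulVec, dotProduct_smul] at this
    simpa [hs, ht] using this
  have hu : 0 ≤ (C₁ : ℂ) * t - s := by
    have := (psd_map_aux hup).dotProduct_mulVec_nonneg v
    have hmap : (C₁ • H - H * M).map (algebraMap ℝ ℂ) = (C₁ : ℂ) • Hc - Hc * Mc := by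
      rw [Matrix.map_sub _ (by simp), hmapHM]
      congr 1
      ext i j
      simp [Matrix.map_apply, hHc]
    rw [hmap, sub_mulVec, dotProduct_sub, smul_mulVec, dotProduct_smul] at this
    simpa [hs, ht] using this
  -- extract real info
  rw [Complex.le_def] at ht0 hl hu
  simp only [Complex.zero_re, Complex.zero_im] at ht0 hl hu
  have htim : t.im = 0 := ht0.2.symm
  have htre : 0 < t.re := lt_of_le_of_ne ht0.1 (by
    intro h
    apply htne
    exact Complex.ext h.symm htim)
  rw [hst] at hl hu
  have him : μ.im = 0 := by
    have h1 := hl.2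
    simp [Complex.sub_im, Complex.mul_im, htim] at h1
    rcases h1 with h1 | h1
    · exact h1
    · exact absurd h1 htre.ne'
  constructor
  · exact him
  constructor
  · have h1 := hl.1
    simp [Complex.sub_re, Complex.mul_re, htim] at h1
    nlinarith [h1]
  · have h1 := hu.1
    simp [Complex.sub_re, Complex.mul_re, htim] at h1
    nlinarith [h1]
end

section
/- For block vectors x = (u, p, p_c) and the matrix ℒ H̃ ℒ^T = [[ηK, G^T, G^T],[G, 2η⁻¹S̄ + kC, 2η⁻¹S̄],[G, 2η⁻¹S̄, 2η⁻¹S̄ + ζ⁻¹Q]] with K SPD and S̄ = G K⁻¹ G^T, the Cauchy–Schwarz/Young estimates give: |p^T G u| ≤ ½(p^T(η⁻¹S̄ + kC)p + η u^T K u), |p_c^T G u| ≤ ½(p_c^T(η⁻¹S̄ + ζ⁻¹Q)p_c + η u^T K u), and |p_c^T S̄ p| ≤ ½(p_c^T S̄ p_c + p^T S̄ p); consequently x^T ℒ H̃ ℒ^T x ≤ 3η u^T K u + 5 p^T(η⁻¹S̄ + kC)p + 5 p_c^T(η⁻¹S̄ + ζ⁻¹Q)p_c. -/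
open Matrix

lemma aux_quad13 {n : ℕ} {K : Matrix (Fin n) (Fin n) ℝ} (hK : K.PosDef)
    {η : ℝ} (hη : 0 < η) (a u : Fin n → ℝ) :
    |a ⬝ᵥ u| ≤ (η⁻¹ * (a ⬝ᵥ (K⁻¹ *ᵥ a)) + η * (u ⬝ᵥ (K *ᵥ u))) / 2 := by
  have hKsymm : Kᵀ = K := by simpa using hK.isHermitian.eq
  set b := K⁻¹ *ᵥ a with hb
  have hKb : K *ᵥ b = a := by
    rw [hb, mulVec_mulVec, mul_nonsing_inv _ (isUnit_iff_ne_zero.mpr hK.det_pos.ne'), one_mulVec]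
  have hsym : ∀ x y : Fin n → ℝ, x ⬝ᵥ (K *ᵥ y) = y ⬝ᵥ (K *ᵥ x) := by
    intro x y
    rw [dotProduct_mulVec]
    nth_rewrite 1 [← hKsymm]
    rw [vecMul_transpose, dotProduct_comm]
  have hexp : ∀ t : ℝ, (η • u + t • b) ⬝ᵥ (K *ᵥ (η • u + t • b)) =
      η^2 * (u ⬝ᵥ (K *ᵥ u)) + 2*η*t*(a ⬝ᵥ u) + t^2 * (a ⬝ᵥ b) := by
    intro t
    simp only [mulVec_add, mulVec_smul, dotProduct_add, add_dotProduct, dotProduct_smul,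
      smul_dotProduct, smul_eq_mul, hKb]
    rw [hsym b u, hKb, dotProduct_comm u a, dotProduct_comm b a]
    ring
  have hpos : ∀ t : ℝ, 0 ≤ η^2 * (u ⬝ᵥ (K *ᵥ u)) + 2*η*t*(a ⬝ᵥ u) + t^2 * (a ⬝ᵥ b) := by
    intro t
    rw [← hexp t]
    simpa using hK.posSemidef.dotProduct_mulVec_nonneg (η • u + t • b)
  have h1 := hpos 1
  have h2 := hpos (-1)
  have hinv : (0:ℝ) < η⁻¹ := inv_pos.mpr hη
  have hii : η⁻¹ * η = 1 := inv_mul_cancel₀ hη.ne'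
  have h1' : 0 ≤ η * (u ⬝ᵥ (K *ᵥ u)) + 2*(a ⬝ᵥ u) + η⁻¹ * (a ⬝ᵥ b) := by
    have h := mul_nonneg hinv.le h1
    have e : η⁻¹ * (η^2 * (u ⬝ᵥ (K *ᵥ u)) + 2*η*1*(a ⬝ᵥ u) + 1^2 * (a ⬝ᵥ b)) =
        η * (u ⬝ᵥ (K *ᵥ u)) + 2*(a ⬝ᵥ u) + η⁻¹ * (a ⬝ᵥ b) := by
      field_simp
    rw [e] at h
    exact h
  have h2' : 0 ≤ η * (u ⬝ᵥ (K *ᵥ u)) - 2*(a ⬝ᵥ u) + η⁻¹ * (a ⬝ᵥ b) := by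
    have h := mul_nonneg hinv.le h2
    have e : η⁻¹ * (η^2 * (u ⬝ᵥ (K *ᵥ u)) + 2*η*(-1)*(a ⬝ᵥ u) + (-1)^2 * (a ⬝ᵥ b)) =
        η * (u ⬝ᵥ (K *ᵥ u)) - 2*(a ⬝ᵥ u) + η⁻¹ * (a ⬝ᵥ b) := by
      field_simp
      ring
    rw [e] at h
    exact h
  rw [abs_le]
  constructor <;> linarith

lemma aux_cross13 {m : ℕ} {S : Matrix (Fin m) (Fin m) ℝ} (hS : S.PosSemidef) (p pc : Fin m → ℝ) :
    |pc ⬝ᵥ (S *ᵥ p)| ≤ (pc ⬝ᵥ (S *ᵥ pc) + p ⬝ᵥ (S *ᵥ p)) / 2 := by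
  have hSsymm : Sᵀ = S := by simpa using hS.isHermitian.eq
  have hsym : ∀ x y : Fin m → ℝ, x ⬝ᵥ (S *ᵥ y) = y ⬝ᵥ (S *ᵥ x) := by
    intro x y
    rw [dotProduct_mulVec]
    nth_rewrite 1 [← hSsymm]
    rw [vecMul_transpose, dotProduct_comm]
  have hpos : ∀ t : ℝ, 0 ≤ pc ⬝ᵥ (S *ᵥ pc) + 2*t*(pc ⬝ᵥ (S *ᵥ p)) + t^2 * (p ⬝ᵥ (S *ᵥ p)) := by
    intro t
    have h := hS.dotProduct_mulVec_nonneg (pc + t • p)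
    simp only [star_trivial, mulVec_add, mulVec_smul, dotProduct_add, add_dotProduct,
      dotProduct_smul, smul_dotProduct, smul_eq_mul] at h
    rw [hsym p pc] at h
    nlinarith [h]
  have h1 := hpos 1
  have h2 := hpos (-1)
  rw [abs_le]
  constructor <;> nlinarith [h1, h2]

theorem stmt13 {n m : ℕ} (K : Matrix (Fin n) (Fin n) ℝ) (G : Matrix (Fin m) (Fin n) ℝ)
    (C Q : Matrix (Fin m) (Fin m) ℝ) (η ζ k : ℝ)
    (hK : K.PosDef) (hC : C.PosSemidef) (hQ : Q.PosDef)
    (hη : 0 < η) (hζ : 0 < ζ) (hk : 0 < k)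
    (S : Matrix (Fin m) (Fin m) ℝ) (hS : S = G * K⁻¹ * Gᵀ)
    (M : Matrix (Fin n ⊕ (Fin m ⊕ Fin m)) (Fin n ⊕ (Fin m ⊕ Fin m)) ℝ)
    (hM : M = fromBlocks (η • K) (fromCols Gᵀ Gᵀ) (fromRows G G)
        (fromBlocks ((2 * η⁻¹) • S + k • C) ((2 * η⁻¹) • S)
          ((2 * η⁻¹) • S) ((2 * η⁻¹) • S + ζ⁻¹ • Q)))
    (u : Fin n → ℝ) (p pc : Fin m → ℝ)
    (x : Fin n ⊕ (Fin m ⊕ Fin m) → ℝ) (hx : x = Sum.elim u (Sum.elim p pc)) :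
    |p ⬝ᵥ (G *ᵥ u)| ≤
      (p ⬝ᵥ ((η⁻¹ • S + k • C) *ᵥ p) + η * (u ⬝ᵥ (K *ᵥ u))) / 2 ∧
    |pc ⬝ᵥ (G *ᵥ u)| ≤
      (pc ⬝ᵥ ((η⁻¹ • S + ζ⁻¹ • Q) *ᵥ pc) + η * (u ⬝ᵥ (K *ᵥ u))) / 2 ∧
    |pc ⬝ᵥ (S *ᵥ p)| ≤ (pc ⬝ᵥ (S *ᵥ pc) + p ⬝ᵥ (S *ᵥ p)) / 2 ∧
    x ⬝ᵥ (M *ᵥ x) ≤ 3 * η * (u ⬝ᵥ (K *ᵥ u))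
      + 5 * (p ⬝ᵥ ((η⁻¹ • S + k • C) *ᵥ p))
      + 5 * (pc ⬝ᵥ ((η⁻¹ • S + ζ⁻¹ • Q) *ᵥ pc)) := by
  -- S is positive semidefinite
  have hSpsd : S.PosSemidef := by
    have h := hK.inv.posSemidef.mul_mul_conjTranspose_same G
    rw [hS]
    simpa using h
  have hSsymm : Sᵀ = S := by simpa using hSpsd.isHermitian.eq
  have hsymS : ∀ a b : Fin m → ℝ, a ⬝ᵥ (S *ᵥ b) = b ⬝ᵥ (S *ᵥ a) := by
    intro a b
    rw [dotProduct_mulVec]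
    nth_rewrite 1 [← hSsymm]
    rw [vecMul_transpose, dotProduct_comm]
  -- rewriting identities
  have hga : ∀ q : Fin m → ℝ, q ⬝ᵥ (G *ᵥ u) = (Gᵀ *ᵥ q) ⬝ᵥ u := by
    intro q
    rw [dotProduct_mulVec, mulVec_transpose]
  have hqp : ∀ q : Fin m → ℝ, q ⬝ᵥ (S *ᵥ q) = (Gᵀ *ᵥ q) ⬝ᵥ (K⁻¹ *ᵥ (Gᵀ *ᵥ q)) := by
    intro q
    rw [hS, ← mulVec_mulVec, ← mulVec_mulVec, dotProduct_mulVec, mulVec_transpose,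
      dotProduct_mulVec]
  -- expansions of the quadratic forms
  have hexp1 : p ⬝ᵥ ((η⁻¹ • S + k • C) *ᵥ p)
      = η⁻¹ * (p ⬝ᵥ (S *ᵥ p)) + k * (p ⬝ᵥ (C *ᵥ p)) := by
    simp [add_mulVec, smul_mulVec, dotProduct_add, dotProduct_smul, smul_eq_mul]
  have hexp2 : pc ⬝ᵥ ((η⁻¹ • S + ζ⁻¹ • Q) *ᵥ pc)
      = η⁻¹ * (pc ⬝ᵥ (S *ᵥ pc)) + ζ⁻¹ * (pc ⬝ᵥ (Q *ᵥ pc)) := by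
    simp [add_mulVec, smul_mulVec, dotProduct_add, dotProduct_smul, smul_eq_mul]
  have hCp : 0 ≤ k * (p ⬝ᵥ (C *ᵥ p)) :=
    mul_nonneg hk.le (by simpa using hC.dotProduct_mulVec_nonneg p)
  have hQc : 0 ≤ ζ⁻¹ * (pc ⬝ᵥ (Q *ᵥ pc)) :=
    mul_nonneg (inv_pos.mpr hζ).le (by simpa using hQ.posSemidef.dotProduct_mulVec_nonneg pc)
  -- part 1
  have part1 : |p ⬝ᵥ (G *ᵥ u)| ≤
      (p ⬝ᵥ ((η⁻¹ • S + k • C) *ᵥ p) + η * (u ⬝ᵥ (K *ᵥ u))) / 2 := by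
    have b1 := aux_quad13 hK hη (Gᵀ *ᵥ p) u
    rw [← hqp p] at b1
    rw [hga p, hexp1]
    calc |(Gᵀ *ᵥ p) ⬝ᵥ u| ≤ (η⁻¹ * (p ⬝ᵥ (S *ᵥ p)) + η * (u ⬝ᵥ (K *ᵥ u))) / 2 := b1
      _ ≤ (η⁻¹ * (p ⬝ᵥ (S *ᵥ p)) + k * (p ⬝ᵥ (C *ᵥ p)) + η * (u ⬝ᵥ (K *ᵥ u))) / 2 := by
          linarith
  -- part 2
  have part2 : |pc ⬝ᵥ (G *ᵥ u)| ≤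
      (pc ⬝ᵥ ((η⁻¹ • S + ζ⁻¹ • Q) *ᵥ pc) + η * (u ⬝ᵥ (K *ᵥ u))) / 2 := by
    have b1 := aux_quad13 hK hη (Gᵀ *ᵥ pc) u
    rw [← hqp pc] at b1
    rw [hga pc, hexp2]
    calc |(Gᵀ *ᵥ pc) ⬝ᵥ u| ≤ (η⁻¹ * (pc ⬝ᵥ (S *ᵥ pc)) + η * (u ⬝ᵥ (K *ᵥ u))) / 2 := b1
      _ ≤ (η⁻¹ * (pc ⬝ᵥ (S *ᵥ pc)) + ζ⁻¹ * (pc ⬝ᵥ (Q *ᵥ pc)) + η * (u ⬝ᵥ (K *ᵥ u))) / 2 := by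
          linarith
  -- part 3
  have part3 := aux_cross13 hSpsd p pc
  refine ⟨part1, part2, part3, ?_⟩
  -- expansion of the full quadratic form
  have hexpand : x ⬝ᵥ (M *ᵥ x) = η * (u ⬝ᵥ (K *ᵥ u))
      + 2 * (p ⬝ᵥ (G *ᵥ u)) + 2 * (pc ⬝ᵥ (G *ᵥ u))
      + 2 * (η⁻¹ * (p ⬝ᵥ (S *ᵥ p))) + k * (p ⬝ᵥ (C *ᵥ p))
      + 2 * (η⁻¹ * (pc ⬝ᵥ (S *ᵥ pc))) + ζ⁻¹ * (pc ⬝ᵥ (Q *ᵥ pc))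
      + 4 * (η⁻¹ * (pc ⬝ᵥ (S *ᵥ p))) := by
    subst hM hx
    simp only [fromBlocks_mulVec, fromCols_mulVec_sumElim, fromRows_mulVec,
      Sum.elim_comp_inl, Sum.elim_comp_inr, sumElim_dotProduct_sumElim,
      mulVec_add, add_mulVec, smul_mulVec, dotProduct_add, dotProduct_smul,
      smul_eq_mul]
    rw [dotProduct_comm u (Gᵀ *ᵥ p), ← hga p, dotProduct_comm u (Gᵀ *ᵥ pc), ← hga pc,
      hsymS p pc]
    ring
  rw [hexpand, hexp1, hexp2]
  -- scalar bounds
  have b1 : p ⬝ᵥ (G *ᵥ u)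
      ≤ (η⁻¹ * (p ⬝ᵥ (S *ᵥ p)) + k * (p ⬝ᵥ (C *ᵥ p)) + η * (u ⬝ᵥ (K *ᵥ u))) / 2 := by
    have := le_trans (le_abs_self _) part1
    rw [hexp1] at this
    linarith
  have b2 : pc ⬝ᵥ (G *ᵥ u)
      ≤ (η⁻¹ * (pc ⬝ᵥ (S *ᵥ pc)) + ζ⁻¹ * (pc ⬝ᵥ (Q *ᵥ pc)) + η * (u ⬝ᵥ (K *ᵥ u))) / 2 := by
    have := le_trans (le_abs_self _) part2
    rw [hexp2] at this
    linarith
  have b3 : η⁻¹ * (pc ⬝ᵥ (S *ᵥ p))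
      ≤ η⁻¹ * ((pc ⬝ᵥ (S *ᵥ pc) + p ⬝ᵥ (S *ᵥ p)) / 2) :=
    mul_le_mul_of_nonneg_left (le_trans (le_abs_self _) part3) (inv_pos.mpr hη).le
  have b3' : η⁻¹ * (pc ⬝ᵥ (S *ᵥ p))
      ≤ (η⁻¹ * (pc ⬝ᵥ (S *ᵥ pc)) + η⁻¹ * (p ⬝ᵥ (S *ᵥ p))) / 2 := by
    calc η⁻¹ * (pc ⬝ᵥ (S *ᵥ p)) ≤ η⁻¹ * ((pc ⬝ᵥ (S *ᵥ pc) + p ⬝ᵥ (S *ᵥ p)) / 2) := b3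
      _ = (η⁻¹ * (pc ⬝ᵥ (S *ᵥ pc)) + η⁻¹ * (p ⬝ᵥ (S *ᵥ p))) / 2 := by ring
  linarith
end
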